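/- Fix a context C and let Σ_*|↑C := {(C',λ') ∈ Σ : C ⊆ C'} carry the subspace topology induced from Σ_*. Then: (a) every continuous function f : Σ_*|↑C → ℝ satisfies f(C',λ') = f(C, λ'|_C) for all (C',λ') ∈ Σ_*|↑C; and (b) the restriction map f ↦ (λ ↦ f(C,λ)) is a bijection from the set of continuous real-valued functions on Σ_*|↑C onto the set of continuous real-valued functions on Σ_C. -/
import Mathlib


open WeakDual

variable (A : Type*) [CStarAlgebra A]

/-- A classical context: a commutative unital closed star-subalgebra of `A`. -/
structure Context where
  carrier : Subalgebra ℂ A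
  star_mem' : ∀ x ∈ carrier, star x ∈ carrier
  isClosed' : IsClosed (carrier : Set A)
  mul_comm' : ∀ x ∈ carrier, ∀ y ∈ carrier, x * y = y * x

variable {A}

/-- The Gelfand spectrum of a context: the character space of `C`. -/
abbrev Context.Spec (C : Context A) : Type _ := characterSpace ℂ C.carrier

/-- The inclusion of a smaller context into a larger one, as a continuous linear map. -/
def Context.inclCLM {D C : Context A} (h : D.carrier ≤ C.carrier) :
    D.carrier →L[ℂ] C.carrier where
  toLinearMap := (Subalgebra.inclusion h).toLinearMap
  cont := continuous_induced_rng.mpr continuous_subtype_val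

/-- Restriction of a character along an inclusion of contexts. -/
noncomputable def Context.restrictChar {D C : Context A} (h : D.carrier ≤ C.carrier)
    (lam : C.Spec) : D.Spec :=
  ⟨(lam : WeakDual ℂ C.carrier).comp (Context.inclCLM h), by
    constructor
    · intro h0
      have h1 : (lam : WeakDual ℂ C.carrier).comp (Context.inclCLM h) (1 : D.carrier) = 0 := by
        rw [h0]; rfl
      have h2 : (lam : WeakDual ℂ C.carrier).comp (Context.inclCLM h) (1 : D.carrier) = 1 := by
        show lam ((Context.inclCLM h) (1 : D.carrier)) = 1
        have h3 : (Context.inclCLM h) (1 : D.carrier) = (1 : C.carrier) := rfl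
        rw [h3]
        exact map_one lam
      rw [h1] at h2
      exact zero_ne_one h2
    · intro x y
      show lam ((Context.inclCLM h) (x * y)) = lam ((Context.inclCLM h) x) * lam ((Context.inclCLM h) y)
      have h4 : (Context.inclCLM h) (x * y) = (Context.inclCLM h) x * (Context.inclCLM h) y := rfl
      rw [h4]
      exact map_mul lam _ _⟩


/-- The disjoint union of all Gelfand spectra of contexts. -/
abbrev SigmaSpace (A : Type*) [CStarAlgebra A] : Type _ := (C : Context A) × C.Spec

/-- The Alexandrov topology on the poset of contexts: opens are the upward closed sets. -/
instance : TopologicalSpace (Context A) where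
  IsOpen s := ∀ C ∈ s, ∀ D : Context A, C.carrier ≤ D.carrier → D ∈ s
  isOpen_univ := fun _ _ _ _ => trivial
  isOpen_inter := fun s t hs ht C hC D hD => ⟨hs C hC.1 D hD, ht C hC.2 D hD⟩
  isOpen_sUnion := fun S hS C hC D hD => by
    obtain ⟨s, hsS, hCs⟩ := hC
    exact ⟨s, hsS, hS s hsS C hCs D hD⟩

/-- The topology `𝒪 Σ_*` of the covariant approach: a set is open iff each of its fibres
is open and it is closed under passing to extensions of characters. -/
instance : TopologicalSpace (SigmaSpace A) where
  IsOpen U := (∀ C : Context A, IsOpen {lam : C.Spec | Sigma.mk C lam ∈ U}) ∧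
    ∀ (C C' : Context A) (h : C.carrier ≤ C'.carrier) (lam' : C'.Spec),
      Sigma.mk C (Context.restrictChar h lam') ∈ U → Sigma.mk C' lam' ∈ U
  isOpen_univ := ⟨fun _ => isOpen_univ, fun _ _ _ _ _ => trivial⟩
  isOpen_inter := fun U V hU hV => ⟨fun C => (hU.1 C).inter (hV.1 C),
    fun C C' h lam hm => ⟨hU.2 C C' h lam hm.1, hV.2 C C' h lam hm.2⟩⟩
  isOpen_sUnion := fun S hS => by
    constructor
    · intro C
      have h1 : {lam : C.Spec | Sigma.mk C lam ∈ ⋃₀ S} =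
          ⋃ U ∈ S, {lam : C.Spec | Sigma.mk C lam ∈ U} := by
        ext lam; simp
      rw [h1]
      exact isOpen_biUnion fun U hU => (hS U hU).1 C
    · rintro C C' h lam ⟨U, hUS, hmU⟩
      exact ⟨U, hUS, (hS U hUS).2 C C' h lam hmU⟩

lemma restrictChar_refl (C : Context A) (lam : C.Spec) :
    Context.restrictChar le_rfl lam = lam := rfl

lemma restrictChar_trans {C D E : Context A} (h1 : C.carrier ≤ D.carrier)
    (h2 : D.carrier ≤ E.carrier) (lam : E.Spec) :
    Context.restrictChar h1 (Context.restrictChar h2 lam) =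
      Context.restrictChar (h1.trans h2) lam := rfl

lemma restrictChar_continuous {D C : Context A} (h : D.carrier ≤ C.carrier) :
    Continuous (Context.restrictChar h) := by
  apply Continuous.subtype_mk
  exact WeakDual.continuous_of_continuous_eval fun d =>
    (WeakDual.eval_continuous (Context.inclCLM h d)).comp continuous_subtype_val

lemma mk_continuous (C : Context A) :
    Continuous (fun lam : C.Spec => (⟨C, lam⟩ : SigmaSpace A)) := by
  rw [continuous_def]
  intro U hU
  exact hU.1 C

lemma r_continuous (C : Context A) :
    Continuous (fun p : {p : SigmaSpace A // C.carrier ≤ p.1.carrier} =>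
      Context.restrictChar p.2 p.1.2) := by
  rw [continuous_def]
  intro V hV
  set U : Set (SigmaSpace A) :=
    {q | ∃ h : C.carrier ≤ q.1.carrier, Context.restrictChar h q.2 ∈ V} with hUdef
  have hUopen : IsOpen U := by
    constructor
    · intro D
      by_cases hCD : C.carrier ≤ D.carrier
      · have : {lam : D.Spec | Sigma.mk D lam ∈ U} =
            Context.restrictChar hCD ⁻¹' V := by
          ext lam
          constructor
          · rintro ⟨h, hv⟩; exact hv
          · intro hv; exact ⟨hCD, hv⟩
        rw [this]
        exact (restrictChar_continuous hCD).isOpen_preimage V hV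
      · have : {lam : D.Spec | Sigma.mk D lam ∈ U} = ∅ := by
          ext lam
          simp only [Set.mem_setOf_eq, Set.mem_empty_iff_false, iff_false]
          rintro ⟨h, -⟩; exact hCD h
        rw [this]; exact isOpen_empty
    · rintro D D' h lam ⟨h0, hv⟩
      exact ⟨h0.trans h, by rw [← restrictChar_trans]; exact hv⟩
  have hpre : (fun p : {p : SigmaSpace A // C.carrier ≤ p.1.carrier} =>
      Context.restrictChar p.2 p.1.2) ⁻¹' V = Subtype.val ⁻¹' U := by
    ext p
    constructor
    · intro hv; exact ⟨p.2, hv⟩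
    · rintro ⟨h, hv⟩; exact hv
  rw [hpre]
  exact hUopen.preimage continuous_subtype_val

/-- Fix a context `C` and equip `Σ_*|↑C = {(C',λ') : C ⊆ C'}` with the
subspace topology induced from `Σ_*`. Then (a) every continuous real-valued function `f` on
`Σ_*|↑C` satisfies `f (C', λ') = f (C, λ'|_C)`, and (b) the restriction map
`f ↦ (λ ↦ f (C, λ))` is a bijection from the continuous real-valued functions on `Σ_*|↑C`
onto the continuous real-valued functions on `Σ_C`. -/
theorem statement15 (C : Context A) :
    (∀ f : {p : SigmaSpace A // C.carrier ≤ p.1.carrier} → ℝ, Continuous f →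
      ∀ p : {p : SigmaSpace A // C.carrier ≤ p.1.carrier},
        f p = f ⟨⟨C, Context.restrictChar p.2 p.1.2⟩, le_rfl⟩) ∧
    Set.BijOn
      (fun (f : {p : SigmaSpace A // C.carrier ≤ p.1.carrier} → ℝ) =>
        fun lam : C.Spec => f ⟨⟨C, lam⟩, le_rfl⟩)
      {f | Continuous f} {g : C.Spec → ℝ | Continuous g} := by
  
  have parta : ∀ f : {p : SigmaSpace A // C.carrier ≤ p.1.carrier} → ℝ, Continuous f →
      ∀ p : {p : SigmaSpace A // C.carrier ≤ p.1.carrier},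
        f p = f ⟨⟨C, Context.restrictChar p.2 p.1.2⟩, le_rfl⟩ := by
    intro f hf p
    by_contra hne
    have hV : IsOpen {x : ℝ | x ≠ f p} := isOpen_ne
    have hopen := hf.isOpen_preimage _ hV
    rw [isOpen_induced_iff] at hopen
    obtain ⟨U, hU, hUeq⟩ := hopen
    have hq : (⟨⟨C, Context.restrictChar p.2 p.1.2⟩, le_rfl⟩ :
        {p : SigmaSpace A // C.carrier ≤ p.1.carrier}) ∈ Subtype.val ⁻¹' U := by
      rw [hUeq]
      exact fun hcon => hne hcon.symm
    have hp : p.val ∈ U := hU.2 C p.1.1 p.2 p.1.2 hq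
    have hfp : p ∈ f ⁻¹' {x : ℝ | x ≠ f p} := by
      rw [← hUeq]; exact hp
    exact hfp rfl
  refine ⟨parta, ?_, ?_, ?_⟩
  · intro f hf
    exact hf.comp ((mk_continuous C).subtype_mk (fun _ => le_refl C.carrier))
  · intro f hf g hg heq
    funext p
    have hfp := parta f hf p
    have hgp := parta g hg p
    rw [hfp, hgp]
    exact congrFun heq (Context.restrictChar p.2 p.1.2)
  · intro g hg
    refine ⟨fun p => g (Context.restrictChar p.2 p.1.2), hg.comp (r_continuous C), ?_⟩
    funext lam
    exact congrArg g (restrictChar_refl C lam)
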